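/- For the simple random walk with up-probability p, let u_i(p) be the conditional probability that the walk steps up from level i, given that the walk (started at 0) returns to 0 before hitting ±k, for -k+1 ≤ i ≤ k-1. Then u_i satisfies the recursion u_i(p) = p(1-p) + u_{i+1}(p) u_i(p) for 1 ≤ i ≤ k-2, with boundary condition u_{k-1}(p) = 0. -/

import Mathlib

open scoped Classical
noncomputable section

def walkPos {n : ℕ} (x : Fin n → Bool) (m : ℕ) : ℤ :=
  ∑ i : Fin n, if (i : ℕ) < m then (if x i then (1 : ℤ) else -1) else 0

def walkWt {n : ℕ} (p : ℝ) (x : Fin n → Bool) : ℝ :=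
  ∏ i : Fin n, if x i then p else 1 - p

/-- Probability that the walk started at level `i` hits 0 before leaving `(-k, k)`. -/
def hitZero (p : ℝ) (k : ℕ) (i : ℤ) : ℝ :=
  ∑' n : ℕ, ∑ x : Fin n → Bool,
    if (i + walkPos x n = 0 ∧
        ∀ m, m < n → i + walkPos x m ≠ 0 ∧ |i + walkPos x m| < (k : ℤ))
    then walkWt p x else 0

/-- `u_i(p)`: the conditional probability that the walk steps up from level `i`,
given that (started at 0) it returns to 0 before hitting `±k`.  By the Markov
property this is `p · P_{i+1}(hit 0 before ±k) / P_i(hit 0 before ±k)`. -/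
def uCond (p : ℝ) (k : ℕ) (i : ℤ) : ℝ :=
  p * hitZero p k (i + 1) / hitZero p k i

def S (p : ℝ) (k : ℕ) (j : ℤ) (n : ℕ) : ℝ :=
  ∑ x : Fin n → Bool,
    if (j + walkPos x n = 0 ∧
        ∀ m, m < n → j + walkPos x m ≠ 0 ∧ |j + walkPos x m| < (k : ℤ))
    then walkWt p x else 0

lemma walkPos_zero {n : ℕ} (x : Fin n → Bool) : walkPos x 0 = 0 := by
  simp [walkPos]

lemma walkPos_cons {n : ℕ} (b : Bool) (t : Fin n → Bool) (m : ℕ) :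
    walkPos (Fin.cons b t) (m + 1) = (if b then (1:ℤ) else -1) + walkPos t m := by
  rw [walkPos, Fin.sum_univ_succ]
  simp only [Fin.cons_zero, Fin.cons_succ, Fin.val_zero, Nat.zero_lt_succ, if_true,
    Fin.val_succ, walkPos, Nat.succ_lt_succ_iff]

lemma walkWt_cons {n : ℕ} (p : ℝ) (b : Bool) (t : Fin n → Bool) :
    walkWt p (Fin.cons b t) = (if b then p else 1 - p) * walkWt p t := by
  rw [walkWt, Fin.prod_univ_succ]
  simp only [Fin.cons_zero, Fin.cons_succ, walkWt]

lemma walkWt_nonneg {n : ℕ} {p : ℝ} (hp : 0 ≤ p) (hp1 : p ≤ 1) (x : Fin n → Bool) :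
    0 ≤ walkWt p x := by
  apply Finset.prod_nonneg
  intro i _
  cases x i <;> simp <;> linarith

lemma S_nonneg {p : ℝ} (hp : 0 ≤ p) (hp1 : p ≤ 1) (k : ℕ) (j : ℤ) (n : ℕ) :
    0 ≤ S p k j n := by
  apply Finset.sum_nonneg
  intro x _
  split
  · exact walkWt_nonneg hp hp1 x
  · exact le_refl _

lemma S_zero_of_ne {p : ℝ} {k : ℕ} {j : ℤ} (hj : j ≠ 0) : S p k j 0 = 0 := by
  simp [S, walkPos_zero, hj]

lemma S_zero_zero {p : ℝ} {k : ℕ} : S p k 0 0 = 1 := by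
  simp [S, walkPos_zero, walkWt]

lemma S_succ_zero {p : ℝ} {k : ℕ} (n : ℕ) : S p k 0 (n + 1) = 0 := by
  apply Finset.sum_eq_zero
  intro x _
  rw [if_neg]
  rintro ⟨-, h⟩
  exact (h 0 (Nat.succ_pos n)).1 (by simp [walkPos_zero])

lemma S_of_abs_ge {p : ℝ} {k : ℕ} {j : ℤ} (hk : 1 ≤ k) (hj : ¬ |j| < (k : ℤ)) (n : ℕ) :
    S p k j n = 0 := by
  have hj0 : j ≠ 0 := by
    intro h; apply hj; rw [h]; simpa using by exact_mod_cast hk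
  cases n with
  | zero => exact S_zero_of_ne hj0
  | succ n =>
    apply Finset.sum_eq_zero
    intro x _
    rw [if_neg]
    rintro ⟨-, h⟩
    exact hj (by simpa [walkPos_zero] using (h 0 (Nat.succ_pos n)).2)


lemma S_succ {p : ℝ} {k : ℕ} {j : ℤ} (hj : j ≠ 0) (hjk : |j| < (k : ℤ)) (n : ℕ) :
    S p k j (n + 1) = p * S p k (j + 1) n + (1 - p) * S p k (j - 1) n := by
  have key : ∀ b : Bool, ∀ t : Fin n → Bool,
      ((j + walkPos (Fin.cons b t) (n+1) = 0 ∧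
        ∀ m, m < n + 1 → j + walkPos (Fin.cons b t) m ≠ 0 ∧ |j + walkPos (Fin.cons b t) m| < (k : ℤ))
      ↔ ((j + (if b then (1:ℤ) else -1)) + walkPos t n = 0 ∧
        ∀ m, m < n → (j + (if b then (1:ℤ) else -1)) + walkPos t m ≠ 0 ∧
          |(j + (if b then (1:ℤ) else -1)) + walkPos t m| < (k : ℤ))) := by
    intro b t
    constructor
    · rintro ⟨h1, h2⟩
      refine ⟨by rw [walkPos_cons] at h1; linarith, fun m hm => ?_⟩
      have := h2 (m+1) (by omega)
      rw [walkPos_cons] at this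
      constructor
      · intro h; exact this.1 (by linarith)
      · have := this.2; rw [show j + ((if b then (1:ℤ) else -1) + walkPos t m) = (j + (if b then (1:ℤ) else -1)) + walkPos t m by ring] at this; exact this
    · rintro ⟨h1, h2⟩
      refine ⟨by rw [walkPos_cons]; linarith, fun m hm => ?_⟩
      cases m with
      | zero => simpa [walkPos_zero] using ⟨hj, hjk⟩
      | succ m =>
        have := h2 m (by omega)
        rw [walkPos_cons]
        exact ⟨by intro h; exact this.1 (by linarith),
          by rw [show j + ((if b then (1:ℤ) else -1) + walkPos t m) = (j + (if b then (1:ℤ) else -1)) + walkPos t m by ring]; exact this.2⟩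
  rw [S, ← Equiv.sum_comp (Fin.consEquiv fun _ => Bool), Fintype.sum_prod_type]
  simp only [Fin.consEquiv, Equiv.coe_fn_mk]
  rw [Fintype.sum_bool]
  have step : ∀ b : Bool, (∑ t : Fin n → Bool,
      if (j + walkPos (Fin.cons b t) (n+1) = 0 ∧
        ∀ m, m < n + 1 → j + walkPos (Fin.cons b t) m ≠ 0 ∧ |j + walkPos (Fin.cons b t) m| < (k : ℤ))
      then walkWt p (Fin.cons b t) else 0)
      = (if b then p else 1 - p) * S p k (j + (if b then (1:ℤ) else -1)) n := by
    intro b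
    rw [S, Finset.mul_sum]
    apply Finset.sum_congr rfl
    intro t _
    rw [walkWt_cons]
    by_cases h : (j + (if b then (1:ℤ) else -1)) + walkPos t n = 0 ∧
        ∀ m, m < n → (j + (if b then (1:ℤ) else -1)) + walkPos t m ≠ 0 ∧
          |(j + (if b then (1:ℤ) else -1)) + walkPos t m| < (k : ℤ)
    · rw [if_pos ((key b t).mpr h), if_pos h]
    · rw [if_neg (fun hc => h ((key b t).mp hc)), if_neg h, mul_zero]
  erw [step true, step false]
  have hj1 : j + (-1 : ℤ) = j - 1 := by ring
  simp [hj1]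

lemma sum_range_S_le {p : ℝ} (hp : 0 ≤ p) (hp1 : p ≤ 1) {k : ℕ} (hk : 1 ≤ k) :
    ∀ (N : ℕ) (j : ℤ), ∑ n ∈ Finset.range N, S p k j n ≤ 1 := by
  intro N
  induction N with
  | zero => intro j; simp
  | succ N ih =>
    intro j
    rw [Finset.sum_range_succ']
    by_cases habs : |j| < (k : ℤ)
    · by_cases hj : j = 0
      · subst hj
        have h1 : ∀ n ∈ Finset.range N, S p k 0 (n + 1) = 0 := fun n _ => S_succ_zero n
        rw [Finset.sum_congr rfl h1, S_zero_zero]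
        simp
      · have h1 : ∀ n ∈ Finset.range N, S p k j (n + 1)
            = p * S p k (j + 1) n + (1 - p) * S p k (j - 1) n :=
          fun n _ => S_succ hj habs n
        rw [Finset.sum_congr rfl h1, S_zero_of_ne hj, add_zero, Finset.sum_add_distrib,
          ← Finset.mul_sum, ← Finset.mul_sum]
        have b1 := ih (j + 1)
        have b2 := ih (j - 1)
        nlinarith
    · have h1 : ∀ n ∈ Finset.range N, S p k j (n + 1) = 0 :=
        fun n _ => S_of_abs_ge hk habs (n + 1)
      rw [Finset.sum_congr rfl h1, S_of_abs_ge hk habs 0]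
      simp

lemma summable_S {p : ℝ} (hp : 0 ≤ p) (hp1 : p ≤ 1) {k : ℕ} (hk : 1 ≤ k) (j : ℤ) :
    Summable (S p k j) :=
  summable_of_sum_range_le (fun n => S_nonneg hp hp1 k j n) (fun N => sum_range_S_le hp hp1 hk N j)

lemma hitZero_eq (p : ℝ) (k : ℕ) (j : ℤ) : hitZero p k j = ∑' n, S p k j n := rfl

lemma hitZero_of_abs_ge {p : ℝ} {k : ℕ} {j : ℤ} (hk : 1 ≤ k) (hj : ¬ |j| < (k : ℤ)) :
    hitZero p k j = 0 := by
  rw [hitZero_eq]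
  simp [S_of_abs_ge hk hj]

lemma hitZero_rec {p : ℝ} (hp : 0 ≤ p) (hp1 : p ≤ 1) {k : ℕ} (hk : 1 ≤ k) {j : ℤ}
    (hj : j ≠ 0) (hjk : |j| < (k : ℤ)) :
    hitZero p k j = p * hitZero p k (j + 1) + (1 - p) * hitZero p k (j - 1) := by
  rw [hitZero_eq, hitZero_eq, hitZero_eq,
    Summable.tsum_eq_zero_add (summable_S hp hp1 hk j), S_zero_of_ne hj, zero_add]
  have h1 : ∀ n : ℕ, S p k j (n + 1) = p * S p k (j + 1) n + (1 - p) * S p k (j - 1) n :=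
    fun n => S_succ hj hjk n
  rw [tsum_congr h1, Summable.tsum_add ((summable_S hp hp1 hk (j+1)).mul_left p)
    ((summable_S hp hp1 hk (j-1)).mul_left (1-p)),
    tsum_mul_left, tsum_mul_left]

lemma walkPos_false {n : ℕ} {m : ℕ} (hm : m ≤ n) :
    walkPos (fun _ : Fin n => false) m = -(m : ℤ) := by
  have : walkPos (fun _ : Fin n => false) m
      = ∑ i : Fin n, (fun i : ℕ => if i < m then (-1 : ℤ) else 0) (i : ℕ) := by
    apply Finset.sum_congr rfl
    intro i _
    simp
  rw [this, Fin.sum_univ_eq_sum_range (fun i => if i < m then (-1:ℤ) else 0) n]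
  rw [← Finset.sum_subset (Finset.range_subset_range.mpr hm)
    (fun x _ hx => if_neg (by simpa using hx))]
  rw [Finset.sum_congr rfl (fun x hx => if_pos (Finset.mem_range.mp hx)),
    Finset.sum_const, Finset.card_range]
  simp

lemma hitZero_pos {p : ℝ} (hp : 0 ≤ p) (hp1 : p < 1) {k : ℕ} (hk : 1 ≤ k) {j : ℤ}
    (hj0 : 0 < j) (hjk : j < (k : ℤ)) : 0 < hitZero p k j := by
  set n := j.toNat with hn
  have hnj : (n : ℤ) = j := Int.toNat_of_nonneg hj0.le
  have hq : (0:ℝ) < 1 - p := by linarith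
  have hpathpos : (0:ℝ) < (1 - p) ^ n := by positivity
  have hcond : (j + walkPos (fun _ : Fin n => false) n = 0 ∧
      ∀ m, m < n → j + walkPos (fun _ : Fin n => false) m ≠ 0 ∧
        |j + walkPos (fun _ : Fin n => false) m| < (k : ℤ)) := by
    refine ⟨by rw [walkPos_false le_rfl]; omega, fun m hm => ?_⟩
    rw [walkPos_false hm.le]
    constructor
    · omega
    · rw [abs_lt]; omega
  have hterm : (1 - p) ^ n ≤ S p k j n := by
    have : ((if (j + walkPos (fun _ : Fin n => false) n = 0 ∧
        ∀ m, m < n → j + walkPos (fun _ : Fin n => false) m ≠ 0 ∧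
          |j + walkPos (fun _ : Fin n => false) m| < (k : ℤ))
        then walkWt p (fun _ : Fin n => false) else 0) : ℝ) ≤ S p k j n := by
      apply Finset.single_le_sum (f := fun x : Fin n → Bool =>
        if (j + walkPos x n = 0 ∧
          ∀ m, m < n → j + walkPos x m ≠ 0 ∧ |j + walkPos x m| < (k : ℤ))
        then walkWt p x else 0)
        (fun x _ => by split; exacts [walkWt_nonneg hp hp1.le x, le_rfl])
        (Finset.mem_univ _)
    rw [if_pos hcond] at this
    calc (1 - p) ^ n = walkWt p (fun _ : Fin n => false) := by
          rw [walkWt]; simp [Finset.prod_const]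
      _ ≤ S p k j n := this
  have hle : S p k j n ≤ hitZero p k j := by
    rw [hitZero_eq]
    exact Summable.le_tsum (summable_S hp hp1.le hk j) n
      (fun m _ => S_nonneg hp hp1.le k j m)
  linarith


/-- The conditional up-probabilities satisfy the boundary condition
`u_{k-1}(p) = 0` and the recursion `u_i(p) = p(1-p) + u_{i+1}(p) u_i(p)`
for `1 ≤ i ≤ k-2`. -/
theorem uCond_recursion (k : ℕ) (hk : 2 ≤ k) (p : ℝ) (hp : 0 < p) (hp1 : p < 1) :
    uCond p k ((k : ℤ) - 1) = 0 ∧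
    ∀ i : ℤ, 1 ≤ i → i ≤ (k : ℤ) - 2 →
      uCond p k i = p * (1 - p) + uCond p k (i + 1) * uCond p k i := by
  have hk1 : 1 ≤ k := le_trans (by norm_num) hk
  constructor
  · rw [uCond, show (k : ℤ) - 1 + 1 = (k : ℤ) by ring,
      hitZero_of_abs_ge hk1 (by simp)]
    simp
  · intro i hi1 hi2
    have hki : (2 : ℤ) ≤ (k : ℤ) := by exact_mod_cast hk
    have h0 : 0 < hitZero p k i :=
      hitZero_pos hp.le hp1 hk1 (by omega) (by omega)
    have h1 : 0 < hitZero p k (i + 1) :=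
      hitZero_pos hp.le hp1 hk1 (by omega) (by omega)
    have hrec : hitZero p k (i + 1)
        = p * hitZero p k (i + 1 + 1) + (1 - p) * hitZero p k (i + 1 - 1) :=
      hitZero_rec hp.le hp1.le hk1 (by omega) (by rw [abs_lt]; omega)
    rw [show i + 1 - 1 = i by ring] at hrec
    simp only [uCond]
    field_simp
    linear_combination hrec
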